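/- arXiv:2604.12694 — 3 statements merged into one kernel-verified Lean document; each statement's English description precedes it below -/
import Mathlib

section
/- Let φ(β) = λ ∑_{j=1}^p d_j |β_j| be a weighted ℓ₁ penalty and ψ(β) = μ ∑_{ℓ=1}^g w_ℓ ‖β_{G_ℓ}‖₂ a weighted group-ℓ₂ penalty over a partition G₁,…,G_g of {1,…,p}, with λ, μ ≥ 0 and d, w ≥ 0. Then the proximal mapping of the sum decomposes as a composition: prox_{φ+ψ}(ξ) = prox_ψ( prox_φ(ξ) ) for all ξ ∈ ℝ^p. -/
lemma soft_id (a xi s : ℝ) (ha : 0 ≤ a)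
    (hs : s = Real.sign xi * max (|xi| - a) 0) : a * |s| = s * (xi - s) := by
  rcases lt_trichotomy xi 0 with h | h | h
  · rw [Real.sign_of_neg h, abs_of_neg h] at hs
    rcases le_or_gt (-xi - a) 0 with h2 | h2
    · rw [max_eq_right h2] at hs; simp [hs]
    · rw [max_eq_left h2.le] at hs
      have hsneg : s < 0 := by rw [hs]; nlinarith
      rw [abs_of_neg hsneg]; rw [hs]; ring
  · simp [h, Real.sign_zero] at hs; simp [hs]
  · rw [Real.sign_of_pos h, abs_of_pos h] at hs
    rcases le_or_gt (xi - a) 0 with h2 | h2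
    · rw [max_eq_right h2] at hs; simp [hs]
    · rw [max_eq_left h2.le] at hs
      have hspos : 0 < s := by rw [hs]; nlinarith
      rw [abs_of_pos hspos]; rw [hs]; ring

lemma soft_bound (a xi s : ℝ) (ha : 0 ≤ a)
    (hs : s = Real.sign xi * max (|xi| - a) 0) : |xi - s| ≤ a := by
  rcases lt_trichotomy xi 0 with h | h | h
  · rw [Real.sign_of_neg h, abs_of_neg h] at hs
    rcases le_or_gt (-xi - a) 0 with h2 | h2
    · rw [max_eq_right h2] at hs
      rw [hs]; rw [abs_of_nonpos (by linarith)]; linarith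
    · rw [max_eq_left h2.le] at hs
      rw [hs]; rw [show xi - -1 * (-xi - a) = -a by ring, abs_of_nonpos (by linarith)]; linarith
  · simp [h, Real.sign_zero] at hs; simp [hs, h, ha]
  · rw [Real.sign_of_pos h, abs_of_pos h] at hs
    rcases le_or_gt (xi - a) 0 with h2 | h2
    · rw [max_eq_right h2] at hs
      rw [hs]; rw [abs_of_nonneg (by linarith)]; linarith
    · rw [max_eq_left h2.le] at hs
      rw [hs]; rw [show xi - 1 * (xi - a) = a by ring, abs_of_nonneg ha]

lemma coord_ineq (a xi u s : ℝ) (ha : 0 ≤ a)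
    (hs : s = Real.sign xi * max (|xi| - a) 0) :
    a * |s| + (1/2)*(s - xi)^2 + (1/2)*(u - s)^2 ≤ a * |u| + (1/2)*(u - xi)^2 := by
  have h1 := soft_id a xi s ha hs
  have h2 := soft_bound a xi s ha hs
  have h3 : (xi - s) * u ≤ a * |u| := by
    calc (xi - s) * u ≤ |(xi - s) * u| := le_abs_self _
      _ = |xi - s| * |u| := abs_mul _ _
      _ ≤ a * |u| := mul_le_mul_of_nonneg_right h2 (abs_nonneg u)
  nlinarith [h1, h3]

lemma coord_eq (a xi s c : ℝ) (ha : 0 ≤ a) (hc : 0 ≤ c)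
    (hs : s = Real.sign xi * max (|xi| - a) 0) :
    a * |c*s| + (1/2)*(c*s - xi)^2 = a * |s| + (1/2)*(s - xi)^2 + (1/2)*(c*s - s)^2 := by
  have h1 := soft_id a xi s ha hs
  have h2 : a * |c*s| = c * (s * (xi - s)) := by
    rw [abs_mul, abs_of_nonneg hc, ← h1]; ring
  nlinarith [h1, h2]

lemma groupB {ι : Type*} (t : Finset ι) (S T : ι → ℝ) (b : ℝ) (hb : 0 ≤ b)
    (hT : ∀ j ∈ t, T j = if Real.sqrt (∑ k ∈ t, (S k)^2) ≠ 0 then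
        (S j / Real.sqrt (∑ k ∈ t, (S k)^2)) *
          max (Real.sqrt (∑ k ∈ t, (S k)^2) - b) 0 else 0)
    (u : ι → ℝ) :
    b * Real.sqrt (∑ j ∈ t, (T j)^2) + (1/2) * ∑ j ∈ t, (T j - S j)^2
      + (1/2) * ∑ j ∈ t, (u j - T j)^2
    ≤ b * Real.sqrt (∑ j ∈ t, (u j)^2) + (1/2) * ∑ j ∈ t, (u j - S j)^2 := by
  set n := Real.sqrt (∑ k ∈ t, (S k)^2) with hn
  have hSnn : (0:ℝ) ≤ ∑ k ∈ t, (S k)^2 := Finset.sum_nonneg fun k _ => sq_nonneg _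
  have hunn : (0:ℝ) ≤ ∑ k ∈ t, (u k)^2 := Finset.sum_nonneg fun k _ => sq_nonneg _
  have hn0 : 0 ≤ n := Real.sqrt_nonneg _
  set R := Real.sqrt (∑ j ∈ t, (u j)^2) with hR
  have hR0 : 0 ≤ R := Real.sqrt_nonneg _
  have hn2 : n^2 = ∑ k ∈ t, (S k)^2 := Real.sq_sqrt hSnn
  set Q := ∑ j ∈ t, S j * u j with hQdef
  have hQ : Q ≤ n * R := by
    calc Q ≤ |Q| := le_abs_self _
      _ = Real.sqrt (Q^2) := (Real.sqrt_sq_eq_abs Q).symm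
      _ ≤ Real.sqrt ((∑ k ∈ t, (S k)^2) * ∑ k ∈ t, (u k)^2) :=
          Real.sqrt_le_sqrt (Finset.sum_mul_sq_le_sq_mul_sq t S u)
      _ = n * R := Real.sqrt_mul hSnn _
  by_cases hne : n = 0
  · have hsum0 : ∑ k ∈ t, (S k)^2 = 0 := Real.sqrt_eq_zero hSnn |>.mp hne
    have hS0 : ∀ k ∈ t, S k = 0 := by
      intro k hk
      have := (Finset.sum_eq_zero_iff_of_nonneg (fun k _ => sq_nonneg (S k))).mp hsum0 k hk
      exact pow_eq_zero_iff (n := 2) (by norm_num) |>.mp this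
    have hT0 : ∀ j ∈ t, T j = 0 := by
      intro j hj; rw [hT j hj, if_neg (by simpa [hn] using hne)]
    have e1 : ∑ j ∈ t, (T j)^2 = 0 := Finset.sum_eq_zero fun j hj => by rw [hT0 j hj]; ring
    have e2 : ∑ j ∈ t, (T j - S j)^2 = 0 := Finset.sum_eq_zero fun j hj => by
      rw [hT0 j hj, hS0 j hj]; ring
    have e3 : ∑ j ∈ t, (u j - T j)^2 = ∑ j ∈ t, (u j)^2 :=
      Finset.sum_congr rfl fun j hj => by rw [hT0 j hj]; ring
    have e4 : ∑ j ∈ t, (u j - S j)^2 = ∑ j ∈ t, (u j)^2 :=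
      Finset.sum_congr rfl fun j hj => by rw [hS0 j hj]; ring
    rw [e1, e2, e3, e4, Real.sqrt_zero]
    have : 0 ≤ b * R := mul_nonneg hb hR0
    linarith
  · have hnpos : 0 < n := lt_of_le_of_ne hn0 (Ne.symm hne)
    set c := max (n - b) 0 / n with hc
    have hc0 : 0 ≤ c := div_nonneg (le_max_right _ _) hn0
    have hTj : ∀ j ∈ t, T j = c * S j := by
      intro j hj; rw [hT j hj, if_pos (by simpa [hn] using hne)]; rw [hc]; ring
    have eT : ∑ j ∈ t, (T j)^2 = (c*n)^2 := by
      calc ∑ j ∈ t, (T j)^2 = ∑ j ∈ t, c^2 * (S j)^2 :=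
            Finset.sum_congr rfl fun j hj => by rw [hTj j hj]; ring
        _ = c^2 * ∑ j ∈ t, (S j)^2 := by rw [Finset.mul_sum]
        _ = (c*n)^2 := by rw [← hn2]; ring
    have eTS : ∑ j ∈ t, (T j - S j)^2 = (c-1)^2 * n^2 := by
      calc ∑ j ∈ t, (T j - S j)^2 = ∑ j ∈ t, (c-1)^2 * (S j)^2 :=
            Finset.sum_congr rfl fun j hj => by rw [hTj j hj]; ring
        _ = (c-1)^2 * ∑ j ∈ t, (S j)^2 := by rw [Finset.mul_sum]
        _ = (c-1)^2 * n^2 := by rw [← hn2]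
    have euT : ∑ j ∈ t, (u j - T j)^2
        = (∑ j ∈ t, (u j)^2) - 2*c*Q + c^2*n^2 := by
      have : ∀ j ∈ t, (u j - T j)^2 = (u j)^2 - 2*c*(S j * u j) + c^2*(S j)^2 := by
        intro j hj; rw [hTj j hj]; ring
      rw [Finset.sum_congr rfl this, Finset.sum_add_distrib, Finset.sum_sub_distrib,
        ← Finset.mul_sum, ← Finset.mul_sum, ← hn2, hQdef]
    have euS : ∑ j ∈ t, (u j - S j)^2 = (∑ j ∈ t, (u j)^2) - 2*Q + n^2 := by
      have : ∀ j ∈ t, (u j - S j)^2 = (u j)^2 - 2*(S j * u j) + (S j)^2 := by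
        intro j _; ring
      rw [Finset.sum_congr rfl this, Finset.sum_add_distrib, Finset.sum_sub_distrib,
        ← Finset.mul_sum, ← hn2, hQdef]
    have esq : Real.sqrt (∑ j ∈ t, (T j)^2) = c * n := by
      rw [eT, Real.sqrt_sq (mul_nonneg hc0 hn0)]
    rw [esq, eTS, euT, euS]
    rcases le_or_gt n b with hnb | hnb
    · have hc' : c = 0 := by rw [hc, max_eq_right (by linarith)]; simp
      rw [hc']
      have h1 : n * R ≤ b * R := mul_le_mul_of_nonneg_right hnb hR0
      nlinarith [hQ]
    · have hmax : max (n - b) 0 = n - b := max_eq_left (by linarith)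
      have hcn : c * n = n - b := by rw [hc, hmax]; field_simp
      have h1cn : (1 - c) * n = b := by nlinarith [hcn]
      have h1c : 0 ≤ 1 - c := by nlinarith [h1cn, hnpos]
      have f1 : (1-c) * Q ≤ (1-c) * (n * R) := mul_le_mul_of_nonneg_left hQ h1c
      have f2 : (1-c) * (n * R) = b * R := by
        rw [show (1-c)*(n*R) = ((1-c)*n)*R by ring, h1cn]
      have e1 : b*(c*n) = b*(n-b) := by rw [hcn]
      have e2 : (c^2 - c)*n^2 = -(b*(n-b)) := by
        have h : (c^2-c)*n^2 = ((c-1)*n)*(c*n) := by ring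
        rw [hcn] at h
        have h' : (c-1)*n = -b := by linarith [h1cn]
        rw [h'] at h
        linarith [h]
      linarith [f1, f2, e1, e2]

lemma part_sum {pp g : ℕ} (G : Fin g → Finset (Fin pp))
    (hpart : ∀ j : Fin pp, ∃! ℓ : Fin g, j ∈ G ℓ) (h : Fin pp → ℝ) :
    ∑ j, h j = ∑ ℓ, ∑ j ∈ G ℓ, h j := by
  have lof : ∀ j : Fin pp, ∃ ℓ, j ∈ G ℓ := fun j => (hpart j).exists
  classical
  choose f hf using lof
  have hG : ∀ ℓ, G ℓ = Finset.univ.filter (fun j => f j = ℓ) := by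
    intro ℓ; ext j
    simp only [Finset.mem_filter, Finset.mem_univ, true_and]
    constructor
    · intro hj
      obtain ⟨ℓ', _, huniq⟩ := hpart j
      rw [huniq (f j) (hf j), huniq ℓ hj]
    · rintro rfl; exact hf j
  rw [show (∑ ℓ, ∑ j ∈ G ℓ, h j) = ∑ ℓ, ∑ j ∈ Finset.univ.filter (fun j => f j = ℓ), h j
      from Finset.sum_congr rfl fun ℓ _ => by rw [hG ℓ]]
  exact (Finset.sum_fiberwise _ _ _).symm

/-- The prox of the sparse group lasso penalty `φ + ψ` (weighted ℓ₁ plus weighted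
group ℓ₂ over a partition) decomposes: `prox_{φ+ψ}(ξ) = prox_ψ(prox_φ(ξ))`,
i.e. group shrinkage applied after coordinatewise soft-thresholding gives the
unique minimizer of `(φ+ψ)(u) + (1/2)‖u - ξ‖²`. -/
theorem stmt_4 (pp g : ℕ) (lam μ : ℝ) (hlam : 0 ≤ lam) (hμ : 0 ≤ μ)
    (d : Fin pp → ℝ) (hd : ∀ j, 0 ≤ d j)
    (w : Fin g → ℝ) (hw : ∀ ℓ, 0 ≤ w ℓ)
    (G : Fin g → Finset (Fin pp))
    (hpart : ∀ j : Fin pp, ∃! ℓ : Fin g, j ∈ G ℓ)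
    (ξ : Fin pp → ℝ)
    (S : Fin pp → ℝ)  -- soft-thresholding of ξ
    (hS : ∀ j, S j = Real.sign (ξ j) * max (|ξ j| - lam * d j) 0)
    (T : Fin pp → ℝ)  -- group shrinkage applied to S
    (hT : ∀ ℓ : Fin g, ∀ j ∈ G ℓ,
      T j =
        if Real.sqrt (∑ k ∈ G ℓ, (S k)^2) ≠ 0 then
          (S j / Real.sqrt (∑ k ∈ G ℓ, (S k)^2)) *
            max (Real.sqrt (∑ k ∈ G ℓ, (S k)^2) - μ * w ℓ) 0
        else 0) :
    (∀ u : Fin pp → ℝ,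
      lam * ∑ j, d j * |T j| + μ * ∑ ℓ, w ℓ * Real.sqrt (∑ k ∈ G ℓ, (T k)^2)
          + (1/2) * ∑ j, (T j - ξ j)^2
        ≤ lam * ∑ j, d j * |u j| + μ * ∑ ℓ, w ℓ * Real.sqrt (∑ k ∈ G ℓ, (u k)^2)
          + (1/2) * ∑ j, (u j - ξ j)^2) ∧
    (∀ u : Fin pp → ℝ,
      lam * ∑ j, d j * |u j| + μ * ∑ ℓ, w ℓ * Real.sqrt (∑ k ∈ G ℓ, (u k)^2)
          + (1/2) * ∑ j, (u j - ξ j)^2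
        = lam * ∑ j, d j * |T j| + μ * ∑ ℓ, w ℓ * Real.sqrt (∑ k ∈ G ℓ, (T k)^2)
          + (1/2) * ∑ j, (T j - ξ j)^2 → u = T) := by
  classical
  -- within each group, T is a nonnegative multiple of S
  have hcs : ∀ j : Fin pp, ∃ c : ℝ, 0 ≤ c ∧ T j = c * S j := by
    intro j
    obtain ⟨ℓ, hℓ⟩ := (hpart j).exists
    have h := hT ℓ j hℓ
    by_cases hne : Real.sqrt (∑ k ∈ G ℓ, (S k)^2) ≠ 0
    · refine ⟨max (Real.sqrt (∑ k ∈ G ℓ, (S k)^2) - μ * w ℓ) 0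
        / Real.sqrt (∑ k ∈ G ℓ, (S k)^2), ?_, ?_⟩
      · exact div_nonneg (le_max_right _ _) (Real.sqrt_nonneg _)
      · rw [h, if_pos hne]; ring
    · exact ⟨0, le_refl 0, by rw [h, if_neg hne]; ring⟩
  have main : ∀ u : Fin pp → ℝ,
      lam * ∑ j, d j * |T j| + μ * ∑ ℓ, w ℓ * Real.sqrt (∑ k ∈ G ℓ, (T k)^2)
        + (1/2) * ∑ j, (T j - ξ j)^2 + (1/2) * ∑ j, (u j - T j)^2
      ≤ lam * ∑ j, d j * |u j| + μ * ∑ ℓ, w ℓ * Real.sqrt (∑ k ∈ G ℓ, (u k)^2)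
        + (1/2) * ∑ j, (u j - ξ j)^2 := by
    intro u
    have h1 : ∑ j, (lam * (d j * |S j|) + (1/2)*((S j - ξ j)^2) + (1/2)*((u j - S j)^2))
        ≤ ∑ j, (lam * (d j * |u j|) + (1/2)*((u j - ξ j)^2)) := by
      refine Finset.sum_le_sum fun j _ => ?_
      have := coord_ineq (lam * d j) (ξ j) (u j) (S j) (mul_nonneg hlam (hd j)) (hS j)
      nlinarith [this]
    have h1eq : ∑ j, (lam * (d j * |T j|) + (1/2)*((T j - ξ j)^2))
        = ∑ j, (lam * (d j * |S j|) + (1/2)*((S j - ξ j)^2) + (1/2)*((T j - S j)^2)) := by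
      refine Finset.sum_congr rfl fun j _ => ?_
      obtain ⟨c, hc0, hcT⟩ := hcs j
      rw [hcT]
      have := coord_eq (lam * d j) (ξ j) (S j) c (mul_nonneg hlam (hd j)) hc0 (hS j)
      nlinarith [this]
    have h2 : ∑ ℓ, (μ * (w ℓ * Real.sqrt (∑ k ∈ G ℓ, (T k)^2))
          + (1/2) * ∑ k ∈ G ℓ, (T k - S k)^2 + (1/2) * ∑ k ∈ G ℓ, (u k - T k)^2)
        ≤ ∑ ℓ, (μ * (w ℓ * Real.sqrt (∑ k ∈ G ℓ, (u k)^2))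
          + (1/2) * ∑ k ∈ G ℓ, (u k - S k)^2) := by
      refine Finset.sum_le_sum fun ℓ _ => ?_
      have := groupB (G ℓ) S T (μ * w ℓ) (mul_nonneg hμ (hw ℓ)) (hT ℓ) u
      nlinarith [this]
    simp only [Finset.sum_add_distrib, ← Finset.mul_sum] at h1 h1eq h2
    have e5 : ∑ j, (u j - S j)^2 = ∑ ℓ, ∑ k ∈ G ℓ, (u k - S k)^2 :=
      part_sum G hpart _
    have e6 : ∑ j, (T j - S j)^2 = ∑ ℓ, ∑ k ∈ G ℓ, (T k - S k)^2 :=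
      part_sum G hpart _
    have e7 : ∑ j, (u j - T j)^2 = ∑ ℓ, ∑ k ∈ G ℓ, (u k - T k)^2 :=
      part_sum G hpart _
    linarith [h1, h1eq, h2, e5, e6, e7]
  constructor
  · intro u
    have h := main u
    have hnn : 0 ≤ ∑ j, (u j - T j)^2 := Finset.sum_nonneg fun j _ => sq_nonneg _
    linarith
  · intro u hu
    have h := main u
    have hnn : 0 ≤ ∑ j, (u j - T j)^2 := Finset.sum_nonneg fun j _ => sq_nonneg _
    have hz : ∑ j, (u j - T j)^2 = 0 := le_antisymm (by linarith) hnn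
    funext j
    have hj := (Finset.sum_eq_zero_iff_of_nonneg
      (fun j _ => sq_nonneg (u j - T j))).mp hz j (Finset.mem_univ j)
    have := pow_eq_zero_iff (n := 2) (by norm_num) |>.mp hj
    linarith [this]
end

section
/- Let g be proper closed convex and consider ADMM applied to min ⟨y,θ⟩ + g(ξ) s.t. Aθ + Bξ = 0 with penalty σ > 0 and step size μ ∈ (0,1]. With errors θ_e^k = θ^k − θ*, ξ_e^k = ξ^k − ξ*, Λ_e^k = Λ^k − Λ*, the iterates satisfy the descent inequality: [ (μσ)^{-1}‖Λ_e^{k+1}‖² + σ‖Bξ_e^{k+1}‖² + σ(1−μ)‖Aθ^{k+1}+Bξ^{k+1}‖² ] − [ same at k ] ≤ −σ‖Aθ^{k+1}+Bξ^{k+1}‖² − σμ‖B(ξ^{k+1}−ξ^k)‖². -/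
open Matrix

lemma dps_nonneg {n : ℕ} (v : Fin n → ℝ) : 0 ≤ v ⬝ᵥ v :=
  Finset.sum_nonneg fun _ _ => mul_self_nonneg _

lemma dp_transp {n m : ℕ} (A : Matrix (Fin n) (Fin m) ℝ) (v : Fin n → ℝ) (u : Fin m → ℝ) :
    (A.transpose *ᵥ v) ⬝ᵥ u = v ⬝ᵥ (A *ᵥ u) := by
  rw [Matrix.mulVec_transpose, ← Matrix.dotProduct_mulVec]

lemma dp_quad {n : ℕ} (a v : Fin n → ℝ) (c : ℝ) :
    (a + c • v) ⬝ᵥ (a + c • v) = a ⬝ᵥ a + 2 * c * (a ⬝ᵥ v) + c ^ 2 * (v ⬝ᵥ v) := by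
  simp only [dotProduct_add, add_dotProduct, dotProduct_smul, smul_dotProduct, smul_eq_mul,
    dotProduct_comm v a]
  ring

lemma dp_sub_sq {n : ℕ} (a v : Fin n → ℝ) :
    (a - v) ⬝ᵥ (a - v) = a ⬝ᵥ a - 2 * (a ⬝ᵥ v) + v ⬝ᵥ v := by
  simp only [dotProduct_sub, sub_dotProduct, dotProduct_comm v a]
  ring

lemma eps_limit (c K : ℝ) (hK : 0 ≤ K)
    (h : ∀ ε : ℝ, 0 < ε → ε ≤ 1 → 0 ≤ ε * c + ε ^ 2 * K) : 0 ≤ c := by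
  by_contra hc
  push_neg at hc
  set ε : ℝ := min 1 (-c / (2 * K + 1)) with hε
  have hεpos : 0 < ε := lt_min one_pos (div_pos (by linarith) (by linarith))
  have hε1 : ε ≤ 1 := min_le_left _ _
  have hεle : ε ≤ -c / (2 * K + 1) := min_le_right _ _
  have h2 : 0 ≤ ε * c + ε ^ 2 * K := h ε hεpos hε1
  have hKb : ε * K ≤ -c / 2 := by
    have : ε * (2 * K + 1) ≤ -c := by
      rw [← le_div_iff₀ (by positivity)]; exact hεle
    nlinarith
  nlinarith

lemma theta_stationary {n m : ℕ} (σ : ℝ) (hσ : 0 < σ)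
    (A : Matrix (Fin n) (Fin m) ℝ) (y : Fin m → ℝ) (Λ b : Fin n → ℝ) (u : Fin m → ℝ)
    (h : ∀ t, y ⬝ᵥ u - Λ ⬝ᵥ (A *ᵥ u) + (σ/2) * ((A *ᵥ u + b) ⬝ᵥ (A *ᵥ u + b))
        ≤ y ⬝ᵥ t - Λ ⬝ᵥ (A *ᵥ t) + (σ/2) * ((A *ᵥ t + b) ⬝ᵥ (A *ᵥ t + b))) :
    A.transpose *ᵥ (Λ - σ • (A *ᵥ u + b)) = y := by
  set G : Fin m → ℝ := y - A.transpose *ᵥ (Λ - σ • (A *ᵥ u + b)) with hG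
  have hGid : G ⬝ᵥ G = y ⬝ᵥ G - Λ ⬝ᵥ (A *ᵥ G) + σ * ((A *ᵥ u + b) ⬝ᵥ (A *ᵥ G)) := by
    nth_rewrite 1 [hG]
    rw [sub_dotProduct, dp_transp, sub_dotProduct, smul_dotProduct, smul_eq_mul]
    ring
  have key : ∀ ε : ℝ, 0 < ε → ε ≤ 1 →
      0 ≤ ε * (-(G ⬝ᵥ G)) + ε ^ 2 * ((σ/2) * ((A *ᵥ G) ⬝ᵥ (A *ᵥ G))) := by
    intro ε _ _
    have h2 := h (u + (-ε) • G)
    rw [Matrix.mulVec_add, Matrix.mulVec_smul] at h2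
    have e1 : y ⬝ᵥ (u + (-ε) • G) = y ⬝ᵥ u + (-ε) * (y ⬝ᵥ G) := by
      rw [dotProduct_add, dotProduct_smul, smul_eq_mul]
    have e2 : Λ ⬝ᵥ (A *ᵥ u + (-ε) • (A *ᵥ G)) = Λ ⬝ᵥ (A *ᵥ u) + (-ε) * (Λ ⬝ᵥ (A *ᵥ G)) := by
      rw [dotProduct_add, dotProduct_smul, smul_eq_mul]
    have e0 : A *ᵥ u + (-ε) • (A *ᵥ G) + b = (A *ᵥ u + b) + (-ε) • (A *ᵥ G) := by abel
    rw [e1, e2, e0, dp_quad] at h2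
    nlinarith [h2, hGid]
  have hle : 0 ≤ -(G ⬝ᵥ G) :=
    eps_limit _ _ (mul_nonneg (by linarith) (dps_nonneg _)) key
  have hz : G = 0 := dotProduct_self_eq_zero.mp
    (le_antisymm (by linarith) (dps_nonneg G))
  have h0 : y - A.transpose *ᵥ (Λ - σ • (A *ᵥ u + b)) = 0 := hG ▸ hz
  exact (sub_eq_zero.mp h0).symm

lemma xi_subgrad {n q : ℕ} (σ : ℝ) (hσ : 0 < σ) (B : Matrix (Fin n) (Fin q) ℝ)
    (g : (Fin q → ℝ) → ℝ) (hconv : ConvexOn ℝ Set.univ g)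
    (Λ a : Fin n → ℝ) (u : Fin q → ℝ)
    (h : ∀ s, g u - Λ ⬝ᵥ (B *ᵥ u) + (σ/2) * ((a + B *ᵥ u) ⬝ᵥ (a + B *ᵥ u))
        ≤ g s - Λ ⬝ᵥ (B *ᵥ s) + (σ/2) * ((a + B *ᵥ s) ⬝ᵥ (a + B *ᵥ s))) :
    ∀ s, g u + (Λ - σ • (a + B *ᵥ u)) ⬝ᵥ (B *ᵥ (s - u)) ≤ g s := by
  intro s
  set d : Fin q → ℝ := s - u with hd
  set r : Fin n → ℝ := a + B *ᵥ u with hr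
  have hdp : (Λ - σ • r) ⬝ᵥ (B *ᵥ d) = Λ ⬝ᵥ (B *ᵥ d) - σ * (r ⬝ᵥ (B *ᵥ d)) := by
    rw [sub_dotProduct, smul_dotProduct, smul_eq_mul]
  have key : ∀ ε : ℝ, 0 < ε → ε ≤ 1 →
      0 ≤ ε * (g s - g u - (Λ - σ • r) ⬝ᵥ (B *ᵥ d))
        + ε ^ 2 * ((σ/2) * ((B *ᵥ d) ⬝ᵥ (B *ᵥ d))) := by
    intro ε hε0 hε1
    have hcvx : g (u + ε • d) ≤ (1 - ε) * g u + ε * g s := by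
      have heq : u + ε • d = (1 - ε) • u + ε • s := by
        rw [hd, smul_sub, sub_smul, one_smul]; abel
      rw [heq]
      exact hconv.2 (Set.mem_univ u) (Set.mem_univ s) (by linarith) (le_of_lt hε0) (by ring)
    have h2 := h (u + ε • d)
    rw [Matrix.mulVec_add, Matrix.mulVec_smul] at h2
    have e1 : Λ ⬝ᵥ (B *ᵥ u + ε • (B *ᵥ d)) = Λ ⬝ᵥ (B *ᵥ u) + ε * (Λ ⬝ᵥ (B *ᵥ d)) := by
      rw [dotProduct_add, dotProduct_smul, smul_eq_mul]
    have e0 : a + (B *ᵥ u + ε • (B *ᵥ d)) = r + ε • (B *ᵥ d) := by rw [hr]; abel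
    rw [e1, e0, dp_quad] at h2
    nlinarith [h2, hcvx, hdp]
  have := eps_limit _ _ (mul_nonneg (by linarith) (dps_nonneg _)) key
  linarith


/-- One-step descent inequality for ADMM applied to
`min ⟨y,θ⟩ + g(ξ)` s.t. `Aθ + Bξ = 0`, with penalty `σ > 0` and step size
`μ ∈ (0,1]`, relative to a KKT point `(θ*, ξ*, Λ*)`. -/
theorem stmt_11 (n m q : ℕ) (σ μ : ℝ) (hσ : 0 < σ) (hμ : μ ∈ Set.Ioc (0:ℝ) 1)
    (A : Matrix (Fin n) (Fin m) ℝ) (B : Matrix (Fin n) (Fin q) ℝ)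
    (y : Fin m → ℝ)
    (g : (Fin q → ℝ) → ℝ)
    (hconv : ConvexOn ℝ Set.univ g) (hlsc : LowerSemicontinuous g)
    (θ : ℕ → Fin m → ℝ) (ξ : ℕ → Fin q → ℝ) (Λ : ℕ → Fin n → ℝ)
    -- θ-update: `θ^{k+1}` minimizes `⟨y,θ⟩ - ⟨Λ^k, Aθ⟩ + (σ/2)‖Aθ + Bξ^k‖²`
    (hθ : ∀ k, ∀ t : Fin m → ℝ,
      (∑ i, y i * θ (k+1) i) - (Λ k) ⬝ᵥ (A *ᵥ θ (k+1))
          + (σ/2) * ((A *ᵥ θ (k+1) + B *ᵥ ξ k) ⬝ᵥ (A *ᵥ θ (k+1) + B *ᵥ ξ k))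
        ≤ (∑ i, y i * t i) - (Λ k) ⬝ᵥ (A *ᵥ t)
          + (σ/2) * ((A *ᵥ t + B *ᵥ ξ k) ⬝ᵥ (A *ᵥ t + B *ᵥ ξ k)))
    -- ξ-update: `ξ^{k+1}` minimizes `g(ξ) - ⟨Λ^k, Bξ⟩ + (σ/2)‖Aθ^{k+1} + Bξ‖²`
    (hξ : ∀ k, ∀ s : Fin q → ℝ,
      g (ξ (k+1)) - (Λ k) ⬝ᵥ (B *ᵥ ξ (k+1))
          + (σ/2) * ((A *ᵥ θ (k+1) + B *ᵥ ξ (k+1)) ⬝ᵥ (A *ᵥ θ (k+1) + B *ᵥ ξ (k+1)))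
        ≤ g s - (Λ k) ⬝ᵥ (B *ᵥ s)
          + (σ/2) * ((A *ᵥ θ (k+1) + B *ᵥ s) ⬝ᵥ (A *ᵥ θ (k+1) + B *ᵥ s)))
    -- multiplier update
    (hΛ : ∀ k, Λ (k+1) = Λ k - (μ * σ) • (A *ᵥ θ (k+1) + B *ᵥ ξ (k+1)))
    -- KKT point
    (θs : Fin m → ℝ) (ξs : Fin q → ℝ) (Λs : Fin n → ℝ)
    (hk1 : A.transpose *ᵥ Λs = y)
    (hk2 : ∀ z : Fin q → ℝ,
      g ξs + ∑ j, (B.transpose *ᵥ Λs) j * (z j - ξs j) ≤ g z)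
    (hk3 : A *ᵥ θs + B *ᵥ ξs = 0) :
    ∀ k, 1 ≤ k →
      ((μ * σ)⁻¹ * ((Λ (k+1) - Λs) ⬝ᵥ (Λ (k+1) - Λs))
        + σ * ((B *ᵥ (ξ (k+1) - ξs)) ⬝ᵥ (B *ᵥ (ξ (k+1) - ξs)))
        + σ * (1 - μ) *
            ((A *ᵥ θ (k+1) + B *ᵥ ξ (k+1)) ⬝ᵥ (A *ᵥ θ (k+1) + B *ᵥ ξ (k+1))))
      - ((μ * σ)⁻¹ * ((Λ k - Λs) ⬝ᵥ (Λ k - Λs))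
        + σ * ((B *ᵥ (ξ k - ξs)) ⬝ᵥ (B *ᵥ (ξ k - ξs)))
        + σ * (1 - μ) * ((A *ᵥ θ k + B *ᵥ ξ k) ⬝ᵥ (A *ᵥ θ k + B *ᵥ ξ k)))
      ≤ - σ * ((A *ᵥ θ (k+1) + B *ᵥ ξ (k+1)) ⬝ᵥ (A *ᵥ θ (k+1) + B *ᵥ ξ (k+1)))
        - σ * μ * ((B *ᵥ (ξ (k+1) - ξ k)) ⬝ᵥ (B *ᵥ (ξ (k+1) - ξ k))) := by
  obtain ⟨hμ0, hμ1⟩ := hμ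
  intro k hk
  obtain ⟨j, rfl⟩ : ∃ j, k = j + 1 := ⟨k - 1, by omega⟩
  set k := j + 1 with hkdef
  -- subgradient inequality for the ξ-updates
  have hsub : ∀ k' : ℕ, ∀ s,
      g (ξ (k'+1)) + (Λ k' - σ • (A *ᵥ θ (k'+1) + B *ᵥ ξ (k'+1))) ⬝ᵥ (B *ᵥ (s - ξ (k'+1)))
        ≤ g s :=
    fun k' => xi_subgrad σ hσ B g hconv (Λ k') (A *ᵥ θ (k'+1)) (ξ (k'+1)) (hξ k')
  -- stationarity of the θ-update at step k
  have hstat : A.transpose *ᵥ (Λ k - σ • (A *ᵥ θ (k+1) + B *ᵥ ξ k)) = y :=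
    theta_stationary σ hσ A y (Λ k) (B *ᵥ ξ k) (θ (k+1)) (hθ k)
  -- KKT subgradient in dot-product form
  have hk2' : ∀ z, g ξs + Λs ⬝ᵥ (B *ᵥ (z - ξs)) ≤ g z := by
    intro z
    have h0 := hk2 z
    have : (∑ i, (B.transpose *ᵥ Λs) i * (z i - ξs i)) = (B.transpose *ᵥ Λs) ⬝ᵥ (z - ξs) := rfl
    rw [this, dp_transp] at h0
    exact h0
  -- abbreviations
  set r1 : Fin n → ℝ := A *ᵥ θ (k+1) + B *ᵥ ξ (k+1) with hr1def
  set r0 : Fin n → ℝ := A *ᵥ θ k + B *ᵥ ξ k with hr0def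
  set ae : Fin n → ℝ := A *ᵥ (θ (k+1) - θs) with haedef
  set be : Fin n → ℝ := B *ᵥ (ξ (k+1) - ξs) with hbedef
  set be0 : Fin n → ℝ := B *ᵥ (ξ k - ξs) with hbe0def
  set bd : Fin n → ℝ := B *ᵥ (ξ (k+1) - ξ k) with hbddef
  set le0 : Fin n → ℝ := Λ k - Λs with hle0def
  -- vector identities
  have hvr1 : r1 = ae + be := by
    rw [hr1def, haedef, hbedef, Matrix.mulVec_sub, Matrix.mulVec_sub]
    have h9 : (A *ᵥ θ (k+1) - A *ᵥ θs) + (B *ᵥ ξ (k+1) - B *ᵥ ξs)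
        = (A *ᵥ θ (k+1) + B *ᵥ ξ (k+1)) - (A *ᵥ θs + B *ᵥ ξs) := by abel
    rw [h9, hk3, sub_zero]
  have hvbe0 : be0 = be - bd := by
    rw [hbe0def, hbedef, hbddef, Matrix.mulVec_sub, Matrix.mulVec_sub, Matrix.mulVec_sub]
    abel
  have hvmid : A *ᵥ θ (k+1) + B *ᵥ ξ k = r1 - bd := by
    rw [hr1def, hbddef, Matrix.mulVec_sub]
    abel
  -- Fact 1: stationarity paired with ae
  have fact1 : le0 ⬝ᵥ ae = σ * (r1 ⬝ᵥ ae) - σ * (bd ⬝ᵥ ae) := by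
    have h1 : (A.transpose *ᵥ (Λ k - σ • (A *ᵥ θ (k+1) + B *ᵥ ξ k))) ⬝ᵥ (θ (k+1) - θs)
        = y ⬝ᵥ (θ (k+1) - θs) := by rw [hstat]
    rw [dp_transp, ← hk1, dp_transp, hvmid] at h1
    rw [sub_dotProduct, smul_dotProduct, smul_eq_mul, sub_dotProduct] at h1
    rw [hle0def, sub_dotProduct]
    linarith [h1]
  -- Fact 2: monotonicity against the KKT point
  have fact2 : 0 ≤ le0 ⬝ᵥ be - σ * (r1 ⬝ᵥ be) := by
    have h1 := hsub k ξs
    have h2 := hk2' (ξ (k+1))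
    have hv : B *ᵥ (ξs - ξ (k+1)) = -be := by
      rw [hbedef, Matrix.mulVec_sub, Matrix.mulVec_sub]; abel
    rw [hv] at h1
    rw [show ξ (k+1) - ξs = ξ (k+1) - ξs from rfl, ← hbedef] at h2
    rw [dotProduct_neg, sub_dotProduct, smul_dotProduct, smul_eq_mul] at h1
    rw [hle0def, sub_dotProduct]
    linarith [h1, h2]
  -- Fact 3: monotonicity between consecutive iterates
  have fact3 : σ * (r1 ⬝ᵥ bd) ≤ σ * ((1 - μ) * (r0 ⬝ᵥ bd)) := by
    have h1 := hsub k (ξ k)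
    have h2 := hsub j (ξ (k+1))
    have hv1 : B *ᵥ (ξ k - ξ (k+1)) = -bd := by
      rw [hbddef, Matrix.mulVec_sub, Matrix.mulVec_sub]; abel
    rw [hv1, dotProduct_neg, sub_dotProduct, smul_dotProduct, smul_eq_mul] at h1
    have hjk : (j : ℕ) + 1 = k := hkdef.symm
    rw [hjk] at h2
    rw [← hbddef, ← hr0def] at h2
    rw [sub_dotProduct, smul_dotProduct, smul_eq_mul] at h2
    have hΛj : Λ k = Λ (j+1) := by rw [hjk]
    have hΛk : Λ k ⬝ᵥ bd = Λ j ⬝ᵥ bd - (μ * σ) * (r0 ⬝ᵥ bd) := by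
      rw [hΛj, hΛ j, hjk, ← hr0def, sub_dotProduct, smul_dotProduct, smul_eq_mul]
    rw [hΛk] at h1
    nlinarith [h1, h2]
  -- square term
  have sq : 0 ≤ σ * (1 - μ) * ((r0 - bd) ⬝ᵥ (r0 - bd)) :=
    mul_nonneg (mul_nonneg (le_of_lt hσ) (by linarith)) (dps_nonneg _)
  rw [dp_sub_sq] at sq
  -- expansions of the goal's quadratic terms
  have hms : (μ * σ) ≠ 0 := ne_of_gt (mul_pos hμ0 hσ)
  have gΛ : Λ (k+1) - Λs = le0 + (-(μ * σ)) • r1 := by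
    rw [hΛ k, ← hr1def, hle0def, neg_smul]; abel
  have E1 : (μ * σ)⁻¹ * ((Λ (k+1) - Λs) ⬝ᵥ (Λ (k+1) - Λs))
      - (μ * σ)⁻¹ * (le0 ⬝ᵥ le0)
      = -2 * (le0 ⬝ᵥ r1) + (μ * σ) * (r1 ⬝ᵥ r1) := by
    rw [gΛ, dp_quad]
    field_simp
    ring
  have E2 : be0 ⬝ᵥ be0 = be ⬝ᵥ be - 2 * (be ⬝ᵥ bd) + bd ⬝ᵥ bd := by
    rw [hvbe0, dp_sub_sq]
  have E3 : le0 ⬝ᵥ r1 = le0 ⬝ᵥ ae + le0 ⬝ᵥ be := by rw [hvr1, dotProduct_add]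
  have E4 : r1 ⬝ᵥ r1 = r1 ⬝ᵥ ae + r1 ⬝ᵥ be := by
    nth_rewrite 2 [hvr1]
    rw [dotProduct_add]
  have E5 : bd ⬝ᵥ ae = r1 ⬝ᵥ bd - be ⬝ᵥ bd := by
    rw [dotProduct_comm r1 bd, hvr1, dotProduct_add, dotProduct_comm be bd]
    ring
  -- final combination
  nlinarith [fact1, fact2, fact3, sq, E1, E2, E3, E4, E5,
    mul_pos hμ0 hσ, dps_nonneg r1, dps_nonneg bd]
end

section
/- With the soft-thresholding operator S_{λd}(ξ)_j = sgn(ξ_j)max{|ξ_j| − λd_j, 0} and group shrinkage T_{μw} acting blockwise as in the group lasso prox, the point 0 ∈ ℝ^p is a fixed point satisfying T_{μw}(S_{λd}(ξ)) = 0 if and only if for every group ℓ, ‖S_{λd}(ξ)_{G_ℓ}‖₂ ≤ μ w_ℓ; equivalently, β = 0 minimizes β ↦ h(β) + (1/2)‖β − ξ‖₂² with h the sparse group lasso penalty iff ‖S_{λd}(ξ)_{G_ℓ}‖₂ ≤ μ w_ℓ for all ℓ. -/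
open Finset

set_option maxHeartbeats 1000000 in
private lemma sgl_key (lam dj ξj Sj : ℝ) (hdj : 0 ≤ lam * dj)
    (hS : Sj = Real.sign ξj * max (|ξj| - lam * dj) 0) :
    Sj * ξj = Sj ^ 2 + lam * dj * |Sj| ∧ |ξj| ≤ lam * dj + |Sj| := by
  rcases lt_trichotomy ξj 0 with h | h | h
  · rw [Real.sign_of_neg h, abs_of_neg h] at hS
    rcases max_cases (-ξj - lam * dj) 0 with ⟨h1, h2⟩ | ⟨h1, h2⟩ <;> rw [h1] at hS
    · have hSle : Sj ≤ 0 := by nlinarith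
      rw [abs_of_nonpos hSle, abs_of_neg h]
      constructor <;> nlinarith
    · rw [abs_of_neg h]
      subst hS
      simp only [mul_zero, abs_zero]
      constructor
      · ring
      · nlinarith
  · subst h
    simp only [Real.sign_zero, zero_mul] at hS
    subst hS
    simp only [abs_zero, mul_zero, zero_mul]
    exact ⟨by ring, by linarith⟩
  · rw [Real.sign_of_pos h, abs_of_pos h] at hS
    rcases max_cases (ξj - lam * dj) 0 with ⟨h1, h2⟩ | ⟨h1, h2⟩ <;> rw [h1] at hS
    · have hSge : 0 ≤ Sj := by nlinarith
      rw [abs_of_nonneg hSge, abs_of_pos h]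
      constructor <;> nlinarith
    · rw [abs_of_pos h]
      subst hS
      simp only [mul_zero, abs_zero]
      constructor
      · ring
      · nlinarith

private lemma sgl_cs {n : ℕ} (A : Finset (Fin n)) (b s : Fin n → ℝ) :
    ∑ j ∈ A, |b j| * |s j| ≤
      Real.sqrt (∑ j ∈ A, (b j) ^ 2) * Real.sqrt (∑ j ∈ A, (s j) ^ 2) := by
  have h := Finset.sum_mul_sq_le_sq_mul_sq A (fun j => |b j|) (fun j => |s j|)
  simp only [sq_abs] at h
  have h0 : 0 ≤ ∑ j ∈ A, |b j| * |s j| :=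
    Finset.sum_nonneg fun j _ => mul_nonneg (abs_nonneg _) (abs_nonneg _)
  rw [← Real.sqrt_mul (by positivity)]
  exact (Real.le_sqrt h0 (by positivity)).mpr h

set_option maxHeartbeats 1000000 in
/-- Zero-solution characterization for the sparse group lasso prox: with
soft-thresholding `S` and group shrinkage `T`, `T(S(ξ)) = 0` iff every group
satisfies `‖S(ξ)_{Gₗ}‖₂ ≤ μ wₗ`; equivalently, `β = 0` minimizes
`h(β) + (1/2)‖β - ξ‖²` iff `‖S(ξ)_{Gₗ}‖₂ ≤ μ wₗ` for all `ℓ`. -/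
theorem stmt_15 (pp g : ℕ) (lam μ : ℝ) (hlam : 0 ≤ lam) (hμ : 0 ≤ μ)
    (d : Fin pp → ℝ) (hd : ∀ j, 0 ≤ d j)
    (w : Fin g → ℝ) (hw : ∀ ℓ, 0 ≤ w ℓ)
    (G : Fin g → Finset (Fin pp))
    (hpart : ∀ j : Fin pp, ∃! ℓ : Fin g, j ∈ G ℓ)
    (ξ : Fin pp → ℝ)
    (S : Fin pp → ℝ)
    (hS : ∀ j, S j = Real.sign (ξ j) * max (|ξ j| - lam * d j) 0)
    (T : Fin pp → ℝ)
    (hT : ∀ ℓ : Fin g, ∀ j ∈ G ℓ,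
      T j =
        if Real.sqrt (∑ k ∈ G ℓ, (S k)^2) ≠ 0 then
          (S j / Real.sqrt (∑ k ∈ G ℓ, (S k)^2)) *
            max (Real.sqrt (∑ k ∈ G ℓ, (S k)^2) - μ * w ℓ) 0
        else 0) :
    (T = 0 ↔ ∀ ℓ : Fin g, Real.sqrt (∑ k ∈ G ℓ, (S k)^2) ≤ μ * w ℓ) ∧
    ((∀ β : Fin pp → ℝ,
        lam * ∑ j, d j * |(0 : Fin pp → ℝ) j|
          + μ * ∑ ℓ, w ℓ * Real.sqrt (∑ k ∈ G ℓ, ((0 : Fin pp → ℝ) k)^2)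
          + (1/2) * ∑ j, ((0 : Fin pp → ℝ) j - ξ j)^2
        ≤ lam * ∑ j, d j * |β j|
          + μ * ∑ ℓ, w ℓ * Real.sqrt (∑ k ∈ G ℓ, (β k)^2)
          + (1/2) * ∑ j, (β j - ξ j)^2)
      ↔ ∀ ℓ : Fin g, Real.sqrt (∑ k ∈ G ℓ, (S k)^2) ≤ μ * w ℓ) := by
  classical
  have hkey : ∀ j, S j * ξ j = (S j) ^ 2 + lam * d j * |S j| ∧
      |ξ j| ≤ lam * d j + |S j| :=
    fun j => sgl_key lam (d j) (ξ j) (S j) (mul_nonneg hlam (hd j)) (hS j)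
  -- partition sum decomposition
  have hsum_part : ∀ f : Fin pp → ℝ, ∑ j, f j = ∑ ℓ, ∑ j ∈ G ℓ, f j := by
    intro f
    rw [← Finset.sum_fiberwise_of_maps_to
      (g := fun j : Fin pp => (hpart j).choose)
      (fun j _ => Finset.mem_univ _) f]
    refine Finset.sum_congr rfl fun ℓ _ => ?_
    refine Finset.sum_congr ?_ fun _ _ => rfl
    ext j
    simp only [Finset.mem_filter, Finset.mem_univ, true_and]
    constructor
    · intro h; rw [← h]; exact (hpart j).choose_spec.1
    · intro h; exact ((hpart j).choose_spec.2 ℓ h).symm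
  -- LHS simplification for the min part
  have hzero :
      lam * ∑ j, d j * |(0 : Fin pp → ℝ) j|
        + μ * ∑ ℓ, w ℓ * Real.sqrt (∑ k ∈ G ℓ, ((0 : Fin pp → ℝ) k) ^ 2)
        + (1/2) * ∑ j, ((0 : Fin pp → ℝ) j - ξ j) ^ 2
      = (1/2) * ∑ j, (ξ j) ^ 2 := by
    simp [neg_sq]
  constructor
  · -- Part 1
    constructor
    · intro hT0 ℓ
      by_cases hNl : Real.sqrt (∑ k ∈ G ℓ, (S k)^2) = 0
      · rw [hNl]; exact mul_nonneg hμ (hw ℓ)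
      · obtain ⟨j, hj, hSj⟩ : ∃ j ∈ G ℓ, S j ≠ 0 := by
          by_contra hcon
          push_neg at hcon
          refine hNl ?_
          rw [Finset.sum_eq_zero fun k hk => by rw [hcon k hk]; ring,
            Real.sqrt_zero]
        have hTj := hT ℓ j hj
        rw [hT0] at hTj
        simp only [Pi.zero_apply] at hTj
        rw [if_pos hNl] at hTj
        have hdiv : S j / Real.sqrt (∑ k ∈ G ℓ, (S k)^2) ≠ 0 :=
          div_ne_zero hSj hNl
        have hmax0 :
            max (Real.sqrt (∑ k ∈ G ℓ, (S k)^2) - μ * w ℓ) 0 = 0 := by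
          rcases mul_eq_zero.mp hTj.symm with h | h
          · exact absurd h hdiv
          · exact h
        linarith [max_eq_right_iff.mp hmax0]
    · intro hle
      funext j
      obtain ⟨ℓ, hjℓ, _⟩ := hpart j
      have hTj := hT ℓ j hjℓ
      have hmax0 :
          max (Real.sqrt (∑ k ∈ G ℓ, (S k)^2) - μ * w ℓ) 0 = 0 :=
        max_eq_right (by linarith [hle ℓ])
      rw [hTj]
      simp [hmax0]
  · -- Part 2
    constructor
    · -- necessity
      intro hmin ℓ
      set Q : ℝ := ∑ k ∈ G ℓ, (S k) ^ 2 with hQdef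
      have hQnn : (0:ℝ) ≤ Q := by
        rw [hQdef]; exact Finset.sum_nonneg fun _ _ => sq_nonneg _
      set Nl : ℝ := Real.sqrt Q with hNldef
      have hNsq : Nl ^ 2 = Q := by rw [hNldef]; exact Real.sq_sqrt hQnn
      by_contra hcon
      push_neg at hcon
      have hN0 : 0 < Nl := lt_of_le_of_lt (mul_nonneg hμ (hw ℓ)) hcon
      set t : ℝ := (Nl - μ * w ℓ) / Nl with htdef
      have ht : 0 < t := div_pos (by linarith) hN0
      have htN : t * Nl = Nl - μ * w ℓ := div_mul_cancel₀ _ hN0.ne'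
      set β : Fin pp → ℝ := fun j => if j ∈ G ℓ then t * S j else 0 with hβdef
      set D : ℝ := ∑ j ∈ G ℓ, d j * |S j| with hDdef
      -- term 1
      have e1 : ∑ j, d j * |β j| = t * D := by
        rw [hDdef, Finset.mul_sum]
        have hcong : ∀ j : Fin pp,
            d j * |β j| = if j ∈ G ℓ then t * (d j * |S j|) else 0 := by
          intro j
          simp only [hβdef]
          split_ifs with h
          · rw [abs_mul, abs_of_pos ht]; ring
          · simp
        rw [Finset.sum_congr rfl fun j _ => hcong j, Finset.sum_ite_mem,
          Finset.univ_inter]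
      -- term 2
      have e2 : ∑ ℓ', w ℓ' * Real.sqrt (∑ k ∈ G ℓ', (β k) ^ 2)
          = w ℓ * (t * Nl) := by
        rw [Finset.sum_eq_single ℓ]
        · have hsum : ∑ k ∈ G ℓ, (β k) ^ 2 = t ^ 2 * Q := by
            rw [hQdef, Finset.mul_sum]
            refine Finset.sum_congr rfl fun k hk => ?_
            simp only [hβdef, if_pos hk]; ring
          rw [hsum, Real.sqrt_mul (sq_nonneg t), Real.sqrt_sq ht.le, hNldef]
        · intro ℓ' _ hne
          have hz : ∑ k ∈ G ℓ', (β k) ^ 2 = 0 := by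
            refine Finset.sum_eq_zero fun k hk => ?_
            have hk' : k ∉ G ℓ := fun hkℓ => hne ((hpart k).unique hk hkℓ)
            simp [hβdef, hk']
          rw [hz, Real.sqrt_zero, mul_zero]
        · intro h; exact absurd (Finset.mem_univ ℓ) h
      -- term 3
      have eβ2 : ∑ j, (β j) ^ 2 = t ^ 2 * Q := by
        rw [hQdef, Finset.mul_sum]
        have hcong : ∀ j : Fin pp,
            (β j) ^ 2 = if j ∈ G ℓ then t ^ 2 * (S j) ^ 2 else 0 := by
          intro j
          simp only [hβdef]
          split_ifs with h
          · ring
          · simp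
        rw [Finset.sum_congr rfl fun j _ => hcong j, Finset.sum_ite_mem,
          Finset.univ_inter]
      have eβξ : ∑ j, β j * ξ j = t * (Q + lam * D) := by
        have eX : ∑ j ∈ G ℓ, S j * ξ j = Q + lam * D := by
          rw [Finset.sum_congr rfl fun j _ => (hkey j).1,
            Finset.sum_add_distrib, hQdef, hDdef, Finset.mul_sum]
          congr 1
          exact Finset.sum_congr rfl fun j _ => by ring
        rw [← eX, Finset.mul_sum]
        have hcong : ∀ j : Fin pp,
            β j * ξ j = if j ∈ G ℓ then t * (S j * ξ j) else 0 := by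
          intro j
          simp only [hβdef]
          split_ifs with h
          · ring
          · simp
        rw [Finset.sum_congr rfl fun j _ => hcong j, Finset.sum_ite_mem,
          Finset.univ_inter]
      have e3 : ∑ j, (β j - ξ j) ^ 2
          = ∑ j, (ξ j) ^ 2 + (t ^ 2 * Q - 2 * (t * (Q + lam * D))) := by
        have hpt : ∀ j : Fin pp, (β j - ξ j) ^ 2
            = (ξ j) ^ 2 + ((β j) ^ 2 - 2 * (β j * ξ j)) := fun j => by ring
        rw [Finset.sum_congr rfl fun j _ => hpt j, Finset.sum_add_distrib,
          Finset.sum_sub_distrib, ← Finset.mul_sum, eβ2, eβξ]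
      have hle := hmin β
      rw [hzero, e1, e2, e3] at hle
      have hfinal : 0 ≤ μ * (w ℓ * (t * Nl)) + (1/2) * (t ^ 2 * Q)
          - t * (Q + lam * D) + lam * (t * D) := by linarith
      rw [← hNsq] at hfinal
      nlinarith [mul_pos (sub_pos.mpr hcon) (sub_pos.mpr hcon), htN, ht, hN0]
    · -- sufficiency
      intro hle β
      rw [hzero]
      have h1 : ∑ j, β j * ξ j ≤ ∑ j, (lam * d j * |β j| + |β j| * |S j|) := by
        refine Finset.sum_le_sum fun j _ => ?_
        have h2 := (hkey j).2
        have habs : β j * ξ j ≤ |β j| * |ξ j| := by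
          calc β j * ξ j ≤ |β j * ξ j| := le_abs_self _
            _ = |β j| * |ξ j| := abs_mul _ _
        nlinarith [abs_nonneg (β j), mul_le_mul_of_nonneg_left h2 (abs_nonneg (β j))]
      have h1' : ∑ j, (lam * d j * |β j| + |β j| * |S j|)
          = lam * ∑ j, d j * |β j| + ∑ j, |β j| * |S j| := by
        rw [Finset.sum_add_distrib, Finset.mul_sum]
        congr 1
        exact Finset.sum_congr rfl fun j _ => by ring
      have h3 : ∑ j, |β j| * |S j|
          ≤ μ * ∑ ℓ, w ℓ * Real.sqrt (∑ k ∈ G ℓ, (β k) ^ 2) := by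
        rw [hsum_part (fun j => |β j| * |S j|), Finset.mul_sum]
        refine Finset.sum_le_sum fun ℓ _ => ?_
        calc ∑ j ∈ G ℓ, |β j| * |S j|
            ≤ Real.sqrt (∑ k ∈ G ℓ, (β k) ^ 2) *
                Real.sqrt (∑ k ∈ G ℓ, (S k) ^ 2) := sgl_cs _ _ _
          _ ≤ Real.sqrt (∑ k ∈ G ℓ, (β k) ^ 2) * (μ * w ℓ) :=
              mul_le_mul_of_nonneg_left (hle ℓ) (Real.sqrt_nonneg _)
          _ = μ * (w ℓ * Real.sqrt (∑ k ∈ G ℓ, (β k) ^ 2)) := by ring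
      have hexp : ∑ j, (β j - ξ j) ^ 2
          = ∑ j, (β j) ^ 2 - 2 * ∑ j, β j * ξ j + ∑ j, (ξ j) ^ 2 := by
        have hpt : ∀ j : Fin pp, (β j - ξ j) ^ 2
            = (β j) ^ 2 - 2 * (β j * ξ j) + (ξ j) ^ 2 := fun j => by ring
        rw [Finset.sum_congr rfl fun j _ => hpt j, Finset.sum_add_distrib,
          Finset.sum_sub_distrib, ← Finset.mul_sum]
      have hβ2 : 0 ≤ ∑ j, (β j) ^ 2 :=
        Finset.sum_nonneg fun _ _ => sq_nonneg _
      rw [hexp]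
      linarith [h1, h1'.le, h3]
end
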